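/- Martingale-type averaging (abstract Kirschner–Krause lemma instance): let Y_1,...,Y_T be random variables adapted to a filtration (F_t) with 0 ≤ Y_t ≤ 1 almost surely, and m_t = E[Y_t | F_{t-1}]. Then with probability at least 1 - δ, Σ_{t=1}^T m_t ≤ 2 Σ_{t=1}^T Y_t + 4 log(1/δ) + 8 log 4 + 1. -/

import Mathlib

open MeasureTheory

private lemma exp_mul_one_sub_le (x : ℝ) : Real.exp x * (1 - x) ≤ 1 := by
  have h1 : 1 - x ≤ Real.exp (-x) := by
    have := Real.add_one_le_exp (-x); linarith
  calc Real.exp x * (1 - x) ≤ Real.exp x * Real.exp (-x) :=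
        mul_le_mul_of_nonneg_left h1 (Real.exp_pos x).le
    _ = 1 := by rw [← Real.exp_add]; simp

private lemma exp_neg_log_two_mul_le {y : ℝ} (h0 : 0 ≤ y) (h1 : y ≤ 1) :
    Real.exp (-(Real.log 2 * y)) ≤ 1 - y / 2 := by
  have hc := convexOn_exp.2 (Set.mem_univ (0 : ℝ)) (Set.mem_univ (-Real.log 2))
    (by linarith : (0:ℝ) ≤ 1 - y) h0 (by ring)
  have he : Real.exp (-Real.log 2) = 1 / 2 := by
    rw [Real.exp_neg, Real.exp_log (by norm_num : (0:ℝ) < 2)]; norm_num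
  have harg : (1 - y) • (0:ℝ) + y • (-Real.log 2) = -(Real.log 2 * y) := by
    simp [smul_eq_mul]; ring
  rw [harg] at hc
  simp only [smul_eq_mul, Real.exp_zero, he] at hc
  linarith

section aux

variable {Ω : Type*} {m0 : MeasurableSpace Ω} (Pr : Measure Ω)
  [IsProbabilityMeasure Pr] (F : Filtration ℕ m0) (Y : ℕ → Ω → ℝ)

private lemma kk_ae_bounds (T : ℕ)
    (hadapted : ∀ t, 1 ≤ t → t ≤ T → StronglyMeasurable[F t] (Y t))
    (hbound : ∀ t, 1 ≤ t → t ≤ T → ∀ᵐ ω ∂Pr, 0 ≤ Y t ω ∧ Y t ω ≤ 1) :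
    ∀ᵐ ω ∂Pr, ∀ t, t ∈ Finset.Icc 1 T →
      0 ≤ Y t ω ∧ Y t ω ≤ 1 ∧ 0 ≤ (Pr[Y t | F (t - 1)]) ω ∧
        (Pr[Y t | F (t - 1)]) ω ≤ 1 := by
  rw [ae_all_iff]
  intro t
  by_cases ht : t ∈ Finset.Icc 1 T
  · obtain ⟨ht1, ht2⟩ := Finset.mem_Icc.1 ht
    have hb := hbound t ht1 ht2
    have hYint : Integrable (Y t) Pr := by
      refine Integrable.mono' (integrable_const 1)
        ((hadapted t ht1 ht2).mono (F.le t)).aestronglyMeasurable ?_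
      filter_upwards [hb] with ω hω
      rw [Real.norm_eq_abs, abs_of_nonneg hω.1]; exact hω.2
    have hg0 : 0 ≤ᵐ[Pr] Pr[Y t | F (t - 1)] :=
      condExp_nonneg (hb.mono fun ω hω => hω.1)
    have hg1 : Pr[Y t | F (t - 1)] ≤ᵐ[Pr] fun _ => (1:ℝ) := by
      have h := condExp_mono (m := F (t-1)) (μ := Pr) hYint (integrable_const (1:ℝ))
        (hb.mono fun ω hω => hω.2)
      rwa [condExp_const (F.le (t-1)) (1:ℝ)] at h
    filter_upwards [hb, hg0, hg1] with ω h1 h2 h3 _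
    exact ⟨h1.1, h1.2, h2, h3⟩
  · filter_upwards with ω ht'
    exact absurd ht' ht

omit [IsProbabilityMeasure Pr] in
private lemma kk_meas (T : ℕ)
    (hadapted : ∀ t, 1 ≤ t → t ≤ T → StronglyMeasurable[F t] (Y t)) :
    StronglyMeasurable[F T] (fun ω => ∑ t ∈ Finset.Icc 1 T,
      ((Pr[Y t | F (t - 1)]) ω / 2 - Real.log 2 * Y t ω)) := by
  refine Finset.stronglyMeasurable_fun_sum _ fun t ht => ?_
  obtain ⟨ht1, ht2⟩ := Finset.mem_Icc.1 ht
  have h1 : StronglyMeasurable[F T] (Pr[Y t | F (t - 1)]) :=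
    stronglyMeasurable_condExp.mono (F.mono (by omega))
  have h2 : StronglyMeasurable[F T] (Y t) := (hadapted t ht1 ht2).mono (F.mono ht2)
  simp_rw [div_eq_mul_inv]
  exact (h1.mul stronglyMeasurable_const).sub (stronglyMeasurable_const.mul h2)

omit [IsProbabilityMeasure Pr] in
private lemma kk_exp_le (T : ℕ) {ω : Ω}
    (h : ∀ t, t ∈ Finset.Icc 1 T → 0 ≤ Y t ω ∧ Y t ω ≤ 1 ∧
      0 ≤ (Pr[Y t | F (t - 1)]) ω ∧ (Pr[Y t | F (t - 1)]) ω ≤ 1) :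
    ∑ t ∈ Finset.Icc 1 T, ((Pr[Y t | F (t - 1)]) ω / 2 - Real.log 2 * Y t ω)
      ≤ (T : ℝ) := by
  calc ∑ t ∈ Finset.Icc 1 T, ((Pr[Y t | F (t - 1)]) ω / 2 - Real.log 2 * Y t ω)
      ≤ ∑ _t ∈ Finset.Icc 1 T, (1:ℝ) := by
        refine Finset.sum_le_sum fun t ht => ?_
        obtain ⟨h1, h2, h3, h4⟩ := h t ht
        have hlog : 0 ≤ Real.log 2 := Real.log_nonneg (by norm_num)
        nlinarith
    _ = (T : ℝ) := by simp [Nat.card_Icc]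

private lemma kk_int (T : ℕ)
    (hadapted : ∀ t, 1 ≤ t → t ≤ T → StronglyMeasurable[F t] (Y t))
    (hbound : ∀ t, 1 ≤ t → t ≤ T → ∀ᵐ ω ∂Pr, 0 ≤ Y t ω ∧ Y t ω ≤ 1) :
    Integrable (fun ω => Real.exp (∑ t ∈ Finset.Icc 1 T,
      ((Pr[Y t | F (t - 1)]) ω / 2 - Real.log 2 * Y t ω))) Pr := by
  refine Integrable.mono' (integrable_const (Real.exp T))
    (Real.continuous_exp.comp_stronglyMeasurable
      ((kk_meas Pr F Y T hadapted).mono (F.le T))).aestronglyMeasurable ?_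
  filter_upwards [kk_ae_bounds Pr F Y T hadapted hbound] with ω hω
  rw [Real.norm_eq_abs, abs_of_nonneg (Real.exp_pos _).le]
  exact Real.exp_le_exp.2 (kk_exp_le Pr F Y T hω)

private lemma kk_key : ∀ (T : ℕ),
    (∀ t, 1 ≤ t → t ≤ T → StronglyMeasurable[F t] (Y t)) →
    (∀ t, 1 ≤ t → t ≤ T → ∀ᵐ ω ∂Pr, 0 ≤ Y t ω ∧ Y t ω ≤ 1) →
    ∫ ω, Real.exp (∑ t ∈ Finset.Icc 1 T,
      ((Pr[Y t | F (t - 1)]) ω / 2 - Real.log 2 * Y t ω)) ∂Pr ≤ 1 := by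
  intro T
  induction T with
  | zero => intro _ _; simp
  | succ T ih =>
    intro hadapted hbound
    have hadT : ∀ t, 1 ≤ t → t ≤ T → StronglyMeasurable[F t] (Y t) :=
      fun t h1 h2 => hadapted t h1 (by omega)
    have hbdT : ∀ t, 1 ≤ t → t ≤ T → ∀ᵐ ω ∂Pr, 0 ≤ Y t ω ∧ Y t ω ≤ 1 :=
      fun t h1 h2 => hbound t h1 (by omega)
    set S : Ω → ℝ := fun ω => ∑ t ∈ Finset.Icc 1 T,
      ((Pr[Y t | F (t - 1)]) ω / 2 - Real.log 2 * Y t ω) with hS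
    set g : Ω → ℝ := Pr[Y (T + 1) | F T] with hg
    set φ : Ω → ℝ := fun ω => Real.exp (S ω + g ω / 2) with hφ
    set ψ : Ω → ℝ := fun ω => Real.exp (-(Real.log 2 * Y (T + 1) ω)) with hψ
    have hsplit : ∀ ω, Real.exp (∑ t ∈ Finset.Icc 1 (T + 1),
        ((Pr[Y t | F (t - 1)]) ω / 2 - Real.log 2 * Y t ω)) = φ ω * ψ ω := by
      intro ω
      rw [Finset.sum_Icc_succ_top (by omega : 1 ≤ T + 1)
        (f := fun t => ((Pr[Y t | F (t - 1)]) ω / 2 - Real.log 2 * Y t ω))]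
      simp only [hφ, hψ, Nat.add_sub_cancel, ← Real.exp_add, ← hg]
      congr 1
      ring
    have hbb := kk_ae_bounds Pr F Y (T + 1) hadapted hbound
    have hTsucc : (T + 1) ∈ Finset.Icc 1 (T + 1) := by simp
    -- measurability
    have hSmeas : StronglyMeasurable[F T] S := kk_meas Pr F Y T hadT
    have hφmeas : StronglyMeasurable[F T] φ := by
      refine Real.continuous_exp.comp_stronglyMeasurable ?_
      have h2 : StronglyMeasurable[F T] (fun ω => g ω / 2) := by
        simp_rw [div_eq_mul_inv]
        exact stronglyMeasurable_condExp.mul stronglyMeasurable_const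
      exact hSmeas.add h2
    have hψmeas : StronglyMeasurable[F (T + 1)] ψ :=
      Real.continuous_exp.comp_stronglyMeasurable
        (((hadapted (T+1) (by omega) le_rfl).const_mul _).neg)
    -- integrability
    have hψint : Integrable ψ Pr := by
      refine Integrable.mono' (integrable_const 1)
        (hψmeas.mono (F.le _)).aestronglyMeasurable ?_
      filter_upwards [hbb] with ω hω
      obtain ⟨h1, h2, _, _⟩ := hω (T + 1) hTsucc
      rw [Real.norm_eq_abs, abs_of_nonneg (Real.exp_pos _).le, ← Real.exp_zero]
      refine Real.exp_le_exp.2 ?_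
      have hlog : 0 ≤ Real.log 2 := Real.log_nonneg (by norm_num)
      nlinarith
    have hφψint : Integrable (fun ω => φ ω * ψ ω) Pr := by
      have := kk_int Pr F Y (T + 1) hadapted hbound
      simpa only [hsplit] using this
    have hYint : Integrable (Y (T + 1)) Pr := by
      refine Integrable.mono' (integrable_const 1)
        ((hadapted (T+1) (by omega) le_rfl).mono (F.le _)).aestronglyMeasurable ?_
      filter_upwards [hbound (T+1) (by omega) le_rfl] with ω hω
      rw [Real.norm_eq_abs, abs_of_nonneg hω.1]; exact hω.2
    have hWint : Integrable (fun ω => 1 - Y (T + 1) ω / 2) Pr :=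
      (integrable_const (1:ℝ)).sub (hYint.div_const 2)
    have hexpSint : Integrable (fun ω => Real.exp (S ω)) Pr :=
      kk_int Pr F Y T hadT hbdT
    -- conditional expectation bound for ψ
    have hcψ : Pr[ψ | F T] ≤ᵐ[Pr] fun ω => 1 - g ω / 2 := by
      have h1 : Pr[ψ | F T] ≤ᵐ[Pr] Pr[fun ω => 1 - Y (T + 1) ω / 2 | F T] := by
        refine condExp_mono hψint hWint ?_
        filter_upwards [hbound (T+1) (by omega) le_rfl] with ω hω
        exact exp_neg_log_two_mul_le hω.1 hω.2
      have h2 : Pr[fun ω => 1 - Y (T + 1) ω / 2 | F T]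
          =ᵐ[Pr] fun ω => 1 - g ω / 2 := by
        have hs := condExp_sub (μ := Pr) (m := F T) (integrable_const (1:ℝ))
          (hYint.div_const 2)
        have hsm : Pr[fun ω => Y (T + 1) ω / 2 | F T] =ᵐ[Pr] fun ω => g ω / 2 := by
          have h3 : (fun ω => Y (T + 1) ω / 2) = (2⁻¹ : ℝ) • Y (T + 1) := by
            funext ω; simp [smul_eq_mul]; ring
          rw [h3]
          filter_upwards [condExp_smul (μ := Pr) (m := F T) (2⁻¹ : ℝ) (Y (T+1))]
            with ω hω
          simp only [Pi.smul_apply, smul_eq_mul] at hω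
          rw [hω]; ring
        have hc1 : Pr[fun _ : Ω => (1:ℝ) | F T] = fun _ => (1:ℝ) :=
          condExp_const (F.le T) (1:ℝ)
        have : (fun ω => 1 - Y (T + 1) ω / 2) =
            (fun _ : Ω => (1:ℝ)) - fun ω => Y (T + 1) ω / 2 := by
          funext ω; simp
        rw [this]
        filter_upwards [hs, hsm] with ω h4 h5
        simp only [Pi.sub_apply] at h4 ⊢
        rw [h4, hc1, h5]
      exact h1.trans h2.le
    -- pull-out property
    have hpull : Pr[fun ω => φ ω * ψ ω | F T] =ᵐ[Pr] fun ω => φ ω * (Pr[ψ | F T]) ω := by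
      have := condExp_mul_of_stronglyMeasurable_left (μ := Pr) hφmeas hφψint hψint
      filter_upwards [this] with ω hω
      exact hω
    -- main chain
    have hmain : Pr[fun ω => φ ω * ψ ω | F T] ≤ᵐ[Pr] fun ω => Real.exp (S ω) := by
      filter_upwards [hpull, hcψ, hbb] with ω h1 h2 hω
      obtain ⟨_, _, hg0, _⟩ := hω (T + 1) hTsucc
      rw [h1]
      have hφpos : 0 ≤ φ ω := (Real.exp_pos _).le
      calc φ ω * (Pr[ψ | F T]) ω ≤ φ ω * (1 - g ω / 2) :=
            mul_le_mul_of_nonneg_left h2 hφpos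
        _ = Real.exp (S ω) * (Real.exp (g ω / 2) * (1 - g ω / 2)) := by
            simp only [hφ, Real.exp_add]; ring
        _ ≤ Real.exp (S ω) * 1 :=
            mul_le_mul_of_nonneg_left (exp_mul_one_sub_le _) (Real.exp_pos _).le
        _ = Real.exp (S ω) := mul_one _
    calc ∫ ω, Real.exp (∑ t ∈ Finset.Icc 1 (T + 1),
          ((Pr[Y t | F (t - 1)]) ω / 2 - Real.log 2 * Y t ω)) ∂Pr
        = ∫ ω, φ ω * ψ ω ∂Pr := by simp only [hsplit]
      _ = ∫ ω, (Pr[fun ω => φ ω * ψ ω | F T]) ω ∂Pr :=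
          (integral_condExp (F.le T)).symm
      _ ≤ ∫ ω, Real.exp (S ω) ∂Pr :=
          integral_mono_ae integrable_condExp hexpSint hmain
      _ ≤ 1 := ih hadT hbdT

end aux

/-- martingale-type averaging (Kirschner–Krause lemma with `b_t = 1`):
for `[0,1]`-valued adapted `Y_t` with `m_t = E[Y_t | F_{t-1}]`, with probability at
least `1 - δ`, `Σ m_t ≤ 2 Σ Y_t + 4 log(1/δ) + 8 log 4 + 1`. -/
theorem stmt_19 {Ω : Type*} {m0 : MeasurableSpace Ω} (Pr : Measure Ω)
    [IsProbabilityMeasure Pr] (T : ℕ) (F : Filtration ℕ m0) (Y : ℕ → Ω → ℝ)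
    (hadapted : ∀ t, 1 ≤ t → t ≤ T → StronglyMeasurable[F t] (Y t))
    (hbound : ∀ t, 1 ≤ t → t ≤ T → ∀ᵐ ω ∂Pr, 0 ≤ Y t ω ∧ Y t ω ≤ 1)
    (δ : ℝ) (hδ : 0 < δ) (hδ1 : δ < 1) :
    ENNReal.ofReal (1 - δ) ≤
      Pr {ω | ∑ t ∈ Finset.Icc 1 T, (Pr[Y t | F (t - 1)]) ω ≤
        2 * ∑ t ∈ Finset.Icc 1 T, Y t ω + 4 * Real.log (1 / δ) + 8 * Real.log 4 + 1} := by
  classical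
  set f : Ω → ℝ := fun ω => ∑ t ∈ Finset.Icc 1 T,
    ((Pr[Y t | F (t - 1)]) ω / 2 - Real.log 2 * Y t ω) with hf
  set A : Set Ω := {ω | ∑ t ∈ Finset.Icc 1 T, (Pr[Y t | F (t - 1)]) ω ≤
    2 * ∑ t ∈ Finset.Icc 1 T, Y t ω + 4 * Real.log (1 / δ) + 8 * Real.log 4 + 1} with hA
  have hδinv : (1:ℝ) < 1 / δ := by
    rw [one_div]
    exact (one_lt_inv₀ hδ).mpr hδ1
  have hlogδ : 0 < Real.log (1 / δ) := Real.log_pos hδinv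
  have hlog4 : 0 < Real.log 4 := Real.log_pos (by norm_num)
  have hlog2 : Real.log 2 < 1 :=
    lt_of_lt_of_le (Real.log_lt_sub_one_of_pos (by norm_num) (by norm_num)) (by norm_num)
  -- measurability of A
  have hgm : StronglyMeasurable
      (fun ω => ∑ t ∈ Finset.Icc 1 T, (Pr[Y t | F (t - 1)]) ω) :=
    Finset.stronglyMeasurable_fun_sum _ fun t _ =>
      stronglyMeasurable_condExp.mono (F.le _)
  have hYm : StronglyMeasurable (fun ω => ∑ t ∈ Finset.Icc 1 T, Y t ω) := by
    refine Finset.stronglyMeasurable_fun_sum _ fun t ht => ?_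
    obtain ⟨h1, h2⟩ := Finset.mem_Icc.1 ht
    exact (hadapted t h1 h2).mono (F.le t)
  have hAmeas : MeasurableSet A := by
    refine measurableSet_le hgm.measurable ?_
    exact ((((hYm.measurable.const_mul 2).add_const _).add_const _).add_const _)
  -- exp f is integrable with integral ≤ 1
  have hint := kk_int Pr F Y T hadapted hbound
  have hkey := kk_key Pr F Y T hadapted hbound
  -- Aᶜ is a.e. contained in {1/δ ≤ exp f}
  have hsub : ∀ᵐ ω ∂Pr, ω ∈ Aᶜ → 1 / δ ≤ Real.exp (f ω) := by
    filter_upwards [kk_ae_bounds Pr F Y T hadapted hbound] with ω hω hmem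
    have hYsum : 0 ≤ ∑ t ∈ Finset.Icc 1 T, Y t ω :=
      Finset.sum_nonneg fun t ht => (hω t ht).1
    have hgt : 2 * ∑ t ∈ Finset.Icc 1 T, Y t ω + 4 * Real.log (1 / δ)
        + 8 * Real.log 4 + 1 < ∑ t ∈ Finset.Icc 1 T, (Pr[Y t | F (t - 1)]) ω := by
      simpa [hA] using hmem
    have hfval : f ω = (∑ t ∈ Finset.Icc 1 T, (Pr[Y t | F (t - 1)]) ω) / 2
        - Real.log 2 * ∑ t ∈ Finset.Icc 1 T, Y t ω := by
      simp [hf, Finset.sum_sub_distrib, Finset.sum_div, Finset.mul_sum]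
    have hflb : Real.log (1 / δ) ≤ f ω := by
      rw [hfval]
      have hl2 : 0 ≤ Real.log 2 := Real.log_nonneg (by norm_num)
      nlinarith
    rw [one_div, ← Real.exp_log (inv_pos.2 hδ), Real.log_inv]
    exact Real.exp_le_exp.2 (by rwa [← Real.log_inv, ← one_div])
  -- Markov
  have hmarkov : Pr {ω | 1 / δ ≤ Real.exp (f ω)} ≤ ENNReal.ofReal δ := by
    have hM := mul_meas_ge_le_integral_of_nonneg
      (ae_of_all Pr fun ω => (Real.exp_pos (f ω)).le) hint (1 / δ)
    have hle : (1 / δ) * (Pr {ω | 1 / δ ≤ Real.exp (f ω)}).toReal ≤ 1 :=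
      le_trans hM hkey
    have htR : (Pr {ω | 1 / δ ≤ Real.exp (f ω)}).toReal ≤ δ := by
      have h2 := mul_le_mul_of_nonneg_left hle hδ.le
      rw [← mul_assoc, mul_one_div_cancel hδ.ne', one_mul, mul_one] at h2
      exact h2
    have hfin : Pr {ω | 1 / δ ≤ Real.exp (f ω)} ≠ ⊤ := measure_ne_top _ _
    rw [← ENNReal.ofReal_toReal hfin]
    exact ENNReal.ofReal_le_ofReal htR
  have hAc : Pr Aᶜ ≤ ENNReal.ofReal δ := by
    refine le_trans ?_ hmarkov
    refine measure_mono_ae ?_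
    filter_upwards [hsub] with ω h hmem using h hmem
  have h1 : Pr A = 1 - Pr Aᶜ := by
    rw [prob_compl_eq_one_sub hAmeas]
    rw [ENNReal.sub_sub_cancel (by simp) (prob_le_one)]
  rw [h1]
  calc ENNReal.ofReal (1 - δ) = 1 - ENNReal.ofReal δ := by
        rw [← ENNReal.ofReal_one, ← ENNReal.ofReal_sub _ hδ.le]
    _ ≤ 1 - Pr Aᶜ := tsub_le_tsub_left hAc 1
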